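/- Let I, K ⊆ Π. The set Γ(I,K) := Φ_I ∪ (Φ⁺ \ Φ_K) is invertible, i.e. both Γ(I,K) and Φ \ Γ(I,K) are closed subsets of Φ, if and only if I is orthogonal to K \ I. -/

import Mathlib

variable {V : Type*} [NormedAddCommGroup V] [InnerProductSpace ℝ V]

/-- `Φ` is a finite reduced crystallographic root system spanning `V`. -/
structure IsRootSystem (Φ : Set V) : Prop where
  finite : Φ.Finite
  zero_not_mem : (0 : V) ∉ Φ
  span_top : Submodule.span ℝ Φ = ⊤
  reduced : ∀ α ∈ Φ, ∀ c : ℝ, c • α ∈ Φ → c = 1 ∨ c = -1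
  crystallographic : ∀ α ∈ Φ, ∀ β ∈ Φ,
    ∃ n : ℤ, 2 * (inner ℝ β α : ℝ) / (inner ℝ α α : ℝ) = (n : ℝ)
  reflect_mem : ∀ α ∈ Φ, ∀ β ∈ Φ,
    β - (2 * (inner ℝ β α : ℝ) / (inner ℝ α α : ℝ)) • α ∈ Φ

/-- `α` is a nonnegative linear combination of elements of `Δ`. -/
def IsNonnegComb (Δ : Set V) (α : V) : Prop :=
  ∃ c : V →₀ ℝ, (c.support : Set V) ⊆ Δ ∧ (∀ v, 0 ≤ c v) ∧ α = c.sum fun v r => r • v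

/-- `Δ` is a base (set of simple roots) of the root system `Φ`. -/
structure IsBase (Φ Δ : Set V) : Prop where
  subset : Δ ⊆ Φ
  indep : LinearIndependent ℝ (Subtype.val : Δ → V)
  pos_or_neg : ∀ α ∈ Φ, IsNonnegComb Δ α ∨ IsNonnegComb Δ (-α)

/-- The set of positive roots with respect to the base `Δ`. -/
def posRoots (Φ Δ : Set V) : Set V := {α ∈ Φ | IsNonnegComb Δ α}

/-- The set of negative roots with respect to the base `Δ`. -/
def negRoots (Φ Δ : Set V) : Set V := {α ∈ Φ | IsNonnegComb Δ (-α)}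

/-- `Φ_A := Φ ∩ span A`. -/
def rootsIn (Φ A : Set V) : Set V := Φ ∩ (Submodule.span ℝ A : Set V)

/-- `Φ_A⁺`. -/
def posRootsIn (Φ Δ A : Set V) : Set V := rootsIn Φ A ∩ posRoots Φ Δ

/-- `Φ_A⁻`. -/
def negRootsIn (Φ Δ A : Set V) : Set V := rootsIn Φ A ∩ negRoots Φ Δ

/-- `Γ` is a closed subset of `Φ`. -/
def IsClosedSubset (Φ Γ : Set V) : Prop := ∀ α ∈ Γ, ∀ β ∈ Γ, α + β ∈ Φ → α + β ∈ Γ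

/-- `X` and `Y` are orthogonal sets of vectors. -/
def OrthogonalSets (X Y : Set V) : Prop := ∀ α ∈ X, ∀ β ∈ Y, (inner ℝ α β : ℝ) = 0


/-- representation of a vector as combination of base elements -/
def BRep (Δ : Set V) (α : V) (c : V →₀ ℝ) : Prop :=
  (c.support : Set V) ⊆ Δ ∧ α = c.sum fun v r => r • v

lemma rep_sum_smul (c : V →₀ ℝ) : (c.sum fun v r => r • v) = Finsupp.linearCombination ℝ id c := by
  rw [Finsupp.linearCombination_apply]; rfl

lemma rep_unique {Φ Δ : Set V} (hΔ : IsBase Φ Δ) {α : V} {c c' : V →₀ ℝ}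
    (h1 : BRep Δ α c) (h2 : BRep Δ α c') : c = c' := by
  have h := linearIndepOn_iff.mp (linearIndependent_subtype_iff.mp hΔ.indep)
  classical
  have hz : c - c' = 0 := by
    apply h
    · rw [Finsupp.mem_supported]
      intro v hv
      have := Finsupp.support_sub (f := c) (g := c') hv
      rcases Finset.mem_union.mp this with h | h
      · exact h1.1 h
      · exact h2.1 h
    · rw [Finsupp.linearCombination_apply,
        Finsupp.sum_sub_index (fun a b1 b2 => sub_smul b1 b2 (id a))]
      have e1 := h1.2
      have e2 := h2.2
      simp only [id_eq] at *
      rw [← e1, ← e2, sub_self]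
  exact sub_eq_zero.mp hz

lemma rep_add {Δ : Set V} {α β : V} {c c' : V →₀ ℝ} (h1 : BRep Δ α c) (h2 : BRep Δ β c') :
    BRep Δ (α + β) (c + c') := by
  classical
  constructor
  · intro v hv
    rcases Finset.mem_union.mp (Finsupp.support_add hv) with h | h
    · exact h1.1 h
    · exact h2.1 h
  · rw [Finsupp.sum_add_index' (fun a => zero_smul ℝ a) (fun a b1 b2 => add_smul b1 b2 a),
      ← h1.2, ← h2.2]

lemma rep_neg {Δ : Set V} {α : V} {c : V →₀ ℝ} (h1 : BRep Δ α c) : BRep Δ (-α) (-c) := by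
  constructor
  · rw [Finsupp.support_neg]; exact h1.1
  · rw [Finsupp.sum_neg_index (fun a => zero_smul ℝ a)]
    conv_lhs => rw [h1.2]
    rw [Finsupp.sum, Finsupp.sum, ← Finset.sum_neg_distrib]
    exact Finset.sum_congr rfl fun a _ => (neg_smul _ _).symm


lemma rep_exists_of_mem_span {Δ A : Set V} (hA : A ⊆ Δ) {α : V}
    (h : α ∈ Submodule.span ℝ A) : ∃ c, BRep Δ α c ∧ (c.support : Set V) ⊆ A := by
  obtain ⟨c, hs, hsum⟩ := Submodule.mem_span_set.mp h
  exact ⟨c, ⟨hs.trans hA, hsum.symm⟩, hs⟩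

lemma mem_span_of_rep_subset {Δ A : Set V} {α : V} {c : V →₀ ℝ} (h : BRep Δ α c)
    (hs : (c.support : Set V) ⊆ A) : α ∈ Submodule.span ℝ A := by
  rw [h.2, Finsupp.sum]
  exact Submodule.sum_mem _ fun v hv =>
    Submodule.smul_mem _ _ (Submodule.subset_span (hs hv))

lemma rep_mem_span_iff {Φ Δ A : Set V} (hΔ : IsBase Φ Δ) (hA : A ⊆ Δ) {α : V} {c : V →₀ ℝ}
    (hc : BRep Δ α c) : α ∈ Submodule.span ℝ A ↔ (c.support : Set V) ⊆ A := by
  constructor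
  · intro h
    obtain ⟨c', hc', hs⟩ := rep_exists_of_mem_span hA h
    rw [rep_unique hΔ hc hc']
    exact hs
  · exact mem_span_of_rep_subset hc

lemma pos_rep {Φ Δ : Set V} {α : V} (h : α ∈ posRoots Φ Δ) :
    ∃ c, BRep Δ α c ∧ ∀ v, 0 ≤ c v := by
  obtain ⟨c, hs, h0, hsum⟩ := h.2
  exact ⟨c, ⟨hs, hsum⟩, h0⟩

lemma rep_pos {Φ Δ : Set V} {α : V} (hα : α ∈ Φ) {c : V →₀ ℝ} (hc : BRep Δ α c)
    (h0 : ∀ v, 0 ≤ c v) : α ∈ posRoots Φ Δ :=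
  ⟨hα, c, hc.1, h0, hc.2⟩

lemma rep_neg_root {Φ Δ : Set V} {α : V} (hα : α ∈ Φ) {c : V →₀ ℝ} (hc : BRep Δ α c)
    (h0 : ∀ v, c v ≤ 0) : α ∈ negRoots Φ Δ :=
  ⟨hα, -c, (rep_neg hc).1, fun v => by simpa using h0 v, (rep_neg hc).2⟩

lemma pos_rep_nonneg {Φ Δ : Set V} (hΔ : IsBase Φ Δ) {α : V} (h : α ∈ posRoots Φ Δ)
    {c : V →₀ ℝ} (hc : BRep Δ α c) : ∀ v, 0 ≤ c v := by
  obtain ⟨c', hc', h0⟩ := pos_rep h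
  rw [rep_unique hΔ hc hc']
  exact h0

lemma neg_rep_nonpos {Φ Δ : Set V} (hΔ : IsBase Φ Δ) {α : V} (h : α ∈ negRoots Φ Δ)
    {c : V →₀ ℝ} (hc : BRep Δ α c) : ∀ v, c v ≤ 0 := by
  obtain ⟨c', hs, h0, hsum⟩ := h.2
  have : BRep Δ α (-c') := by
    have := rep_neg (Δ := Δ) (α := -α) (c := c') ⟨hs, hsum⟩
    simpa using this
  rw [rep_unique hΔ hc this]
  intro v
  simpa using h0 v

lemma root_rep_exists {Φ Δ : Set V} (hΔ : IsBase Φ Δ) {α : V} (hα : α ∈ Φ) :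
    ∃ c, BRep Δ α c := by
  rcases hΔ.pos_or_neg α hα with ⟨c, hs, _, hsum⟩ | ⟨c, hs, _, hsum⟩
  · exact ⟨c, hs, hsum⟩
  · refine ⟨-c, (rep_neg ⟨hs, hsum⟩).1, ?_⟩
    have := (rep_neg (Δ := Δ) (α := -α) (c := c) ⟨hs, hsum⟩).2
    simpa using this

lemma root_pos_or_neg {Φ Δ : Set V} (hΔ : IsBase Φ Δ) {α : V} (hα : α ∈ Φ) :
    α ∈ posRoots Φ Δ ∨ α ∈ negRoots Φ Δ := by
  rcases hΔ.pos_or_neg α hα with h | h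
  · exact Or.inl ⟨hα, h⟩
  · exact Or.inr ⟨hα, h⟩

lemma not_pos_and_neg {Φ Δ : Set V} (hΦ : IsRootSystem Φ) (hΔ : IsBase Φ Δ) {α : V}
    (hp : α ∈ posRoots Φ Δ) (hn : α ∈ negRoots Φ Δ) : False := by
  obtain ⟨c, hc, h0⟩ := pos_rep hp
  have h0' := neg_rep_nonpos hΔ hn hc
  have hc0 : c = 0 := by
    ext v
    exact le_antisymm (h0' v) (h0 v)
  have : α = 0 := by
    rw [hc.2, hc0, Finsupp.sum_zero_index]
  exact hΦ.zero_not_mem (this ▸ hp.1)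

lemma root_ne_zero {Φ : Set V} (hΦ : IsRootSystem Φ) {α : V} (hα : α ∈ Φ) : α ≠ 0 :=
  fun h => hΦ.zero_not_mem (h ▸ hα)

lemma neg_mem {Φ : Set V} (hΦ : IsRootSystem Φ) {α : V} (hα : α ∈ Φ) : -α ∈ Φ := by
  have h := hΦ.reflect_mem α hα α hα
  have hne : (inner ℝ α α : ℝ) ≠ 0 := by
    intro h0
    exact root_ne_zero hΦ hα (inner_self_eq_zero.mp h0)
  rw [mul_div_assoc, div_self hne, mul_one] at h
  have : α - (2:ℝ) • α = -α := by
    rw [two_smul]; abel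
  rwa [this] at h

lemma orth_span {X Y : Set V} (h : OrthogonalSets X Y) {a b : V}
    (ha : a ∈ Submodule.span ℝ X) (hb : b ∈ Submodule.span ℝ Y) : (inner ℝ a b : ℝ) = 0 := by
  induction ha using Submodule.span_induction with
  | mem x hx =>
    induction hb using Submodule.span_induction with
    | mem y hy => exact h x hx y hy
    | zero => exact inner_zero_right x
    | add y z _ _ hy hz => rw [inner_add_right, hy, hz, add_zero]
    | smul r y _ hy => rw [real_inner_smul_right, hy, mul_zero]
  | zero => exact inner_zero_left b
  | add x y _ _ hx hy => rw [inner_add_left, hx, hy, add_zero]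
  | smul r x _ hx => rw [real_inner_smul_left, hx, mul_zero]

lemma inner_self_pos' {α : V} (h : α ≠ 0) : 0 < (inner ℝ α α : ℝ) :=
  lt_of_le_of_ne real_inner_self_nonneg (fun he => h (inner_self_eq_zero.mp he.symm))

lemma rep_sub {Δ : Set V} {α β : V} {c c' : V →₀ ℝ} (h1 : BRep Δ α c) (h2 : BRep Δ β c') :
    BRep Δ (α - β) (c - c') := by
  rw [sub_eq_add_neg, sub_eq_add_neg]
  exact rep_add h1 (rep_neg h2)

lemma rep_single {Δ : Set V} {a : V} (ha : a ∈ Δ) : BRep Δ a (Finsupp.single a 1) := by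
  constructor
  · intro v hv
    have := Finsupp.support_single_subset hv
    simp only [Finset.mem_singleton] at this
    rwa [this]
  · rw [Finsupp.sum_single_index (zero_smul ℝ a), one_smul]

/-- If two roots have negative inner product and are not opposite, their sum is a root. -/
lemma add_mem_of_inner_neg {Φ : Set V} (hΦ : IsRootSystem Φ) {α β : V}
    (hα : α ∈ Φ) (hβ : β ∈ Φ) (hneg : (inner ℝ α β : ℝ) < 0) (hne : α + β ≠ 0) :
    α + β ∈ Φ := by
  have haa : (0:ℝ) < inner ℝ α α := inner_self_pos' (root_ne_zero hΦ hα)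
  have hbb : (0:ℝ) < inner ℝ β β := inner_self_pos' (root_ne_zero hΦ hβ)
  obtain ⟨n, hn⟩ := hΦ.crystallographic α hα β hβ
  obtain ⟨m, hm⟩ := hΦ.crystallographic β hβ α hα
  have hba : (inner ℝ β α : ℝ) = inner ℝ α β := (real_inner_comm β α).symm
  -- n, m are negative
  have hnneg : (n : ℝ) < 0 := by
    rw [← hn, hba]
    exact div_neg_of_neg_of_pos (by linarith) haa
  have hmneg : (m : ℝ) < 0 := by
    rw [← hm]
    exact div_neg_of_neg_of_pos (by linarith) hbb
  -- strict Cauchy-Schwarz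
  have hcs : (inner ℝ α β : ℝ)^2 < (inner ℝ α α : ℝ) * (inner ℝ β β : ℝ) := by
    have hprop : ‖β‖ • (-α) ≠ ‖-α‖ • β := by
      intro hp
      have hnb : ‖β‖ ≠ 0 := norm_ne_zero_iff.mpr (root_ne_zero hΦ hβ)
      have hna : ‖α‖ ≠ 0 := norm_ne_zero_iff.mpr (root_ne_zero hΦ hα)
      rw [norm_neg] at hp
      have hβeq : β = (-(‖α‖⁻¹ * ‖β‖)) • α := by
        calc β = ‖α‖⁻¹ • (‖β‖ • -α) := by
              rw [hp, smul_smul, inv_mul_cancel₀ hna, one_smul]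
        _ = (‖α‖⁻¹ * ‖β‖) • -α := by rw [smul_smul]
        _ = (-(‖α‖⁻¹ * ‖β‖)) • α := by rw [neg_smul, smul_neg]
      have htneg : -(‖α‖⁻¹ * ‖β‖) < 0 := by
        have h1 : 0 < ‖α‖⁻¹ := inv_pos.mpr (lt_of_le_of_ne (norm_nonneg α) (Ne.symm hna))
        have h2 : 0 < ‖β‖ := lt_of_le_of_ne (norm_nonneg β) (Ne.symm hnb)
        nlinarith
      rcases hΦ.reduced α hα _ (hβeq ▸ hβ) with h1 | h1
      · rw [h1] at htneg; linarith
      · rw [h1, neg_one_smul] at hβeq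
        rw [hβeq] at hne
        simp at hne
    have hlt : (inner ℝ (-α) β : ℝ) < ‖-α‖ * ‖β‖ := by
      have := inner_lt_norm_mul_iff_real.mpr hprop
      linarith [this]
    rw [inner_neg_left, norm_neg] at hlt
    have hgt : (0:ℝ) < -(inner ℝ α β : ℝ) := by linarith
    have : (inner ℝ α β : ℝ)^2 = (-(inner ℝ α β : ℝ))^2 := by ring
    rw [this, real_inner_self_eq_norm_sq, real_inner_self_eq_norm_sq]
    calc (-(inner ℝ α β : ℝ))^2 < (‖α‖ * ‖β‖)^2 := by nlinarith
    _ = ‖α‖^2 * ‖β‖^2 := by ring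
  -- product of Cartan integers < 4
  have h2n : 2 * (inner ℝ β α : ℝ) = n * inner ℝ α α := by
    field_simp at hn
    linarith [hn]
  have h2m : 2 * (inner ℝ α β : ℝ) = m * inner ℝ β β := by
    field_simp at hm
    linarith [hm]
  have hprod : (n : ℝ) * m < 4 := by
    have h4 : (n : ℝ) * m * (inner ℝ α α * inner ℝ β β) = 4 * (inner ℝ α β : ℝ)^2 := by
      have : ((n:ℝ) * inner ℝ α α) * ((m:ℝ) * inner ℝ β β) = (2 * (inner ℝ β α : ℝ)) * (2 * (inner ℝ α β : ℝ)) := by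
        rw [h2n, h2m]
      rw [hba] at this
      nlinarith [this]
    nlinarith [mul_pos haa hbb]
  have hn1 : n ≤ -1 := by
    have : n < 0 := by exact_mod_cast hnneg
    omega
  have hm1 : m ≤ -1 := by
    have : m < 0 := by exact_mod_cast hmneg
    omega
  have hnm : n = -1 ∨ m = -1 := by
    by_contra hc
    push_neg at hc
    have h1 : n ≤ -2 := by omega
    have h2 : m ≤ -2 := by omega
    have : (4:ℝ) ≤ (n:ℝ) * m := by
      have := mul_le_mul_of_nonpos_right (show (n:ℝ) ≤ -2 by exact_mod_cast h1)
        (show (m:ℝ) ≤ 0 by linarith)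
      nlinarith [show (m:ℝ) ≤ -2 from by exact_mod_cast h2]
    linarith
  rcases hnm with h | h
  · have := hΦ.reflect_mem α hα β hβ
    rw [hn, h] at this
    simpa [add_comm, sub_eq_add_neg] using this
  · have := hΦ.reflect_mem β hβ α hα
    rw [hm, h] at this
    simpa [sub_eq_add_neg] using this

lemma rep_zero {Δ : Set V} : BRep Δ (0 : V) (0 : V →₀ ℝ) := by
  constructor
  · simp
  · rw [Finsupp.sum_zero_index]

lemma rep_nonzero {Φ Δ : Set V} (hΔ : IsBase Φ Δ) {α : V} {c : V →₀ ℝ}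
    (hc : BRep Δ α c) (hα : α ≠ 0) : c ≠ 0 := by
  intro h0
  exact hα (by rw [hc.2, h0, Finsupp.sum_zero_index])

/-- Key lemma: a root lying in the span of the union of two orthogonal subsets of the base
lies in the span of one of them. -/
lemma orth_decomp {Φ Δ : Set V} (hΦ : IsRootSystem Φ) (hΔ : IsBase Φ Δ)
    {J₁ J₂ : Set V} (h1 : J₁ ⊆ Δ) (h2 : J₂ ⊆ Δ) (horth : OrthogonalSets J₁ J₂)
    {β : V} (hβ : β ∈ Φ) (hsp : β ∈ Submodule.span ℝ (J₁ ∪ J₂)) :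
    β ∈ Submodule.span ℝ J₁ ∨ β ∈ Submodule.span ℝ J₂ := by
  classical
  have hdisj : ∀ a, a ∈ J₁ → a ∉ J₂ := by
    intro a ha1 ha2
    have := horth a ha1 a ha2
    exact root_ne_zero hΦ (hΔ.subset (h1 ha1)) (inner_self_eq_zero.mp this)
  -- it suffices to treat positive roots
  suffices Hpos : ∀ γ : V, γ ∈ posRoots Φ Δ → γ ∈ Submodule.span ℝ (J₁ ∪ J₂) →
      γ ∈ Submodule.span ℝ J₁ ∨ γ ∈ Submodule.span ℝ J₂ by
    rcases root_pos_or_neg hΔ hβ with hp | hn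
    · exact Hpos β hp hsp
    · obtain ⟨c, hs, h0, hsum⟩ := hn.2
      have hnegpos : -β ∈ posRoots Φ Δ := ⟨neg_mem hΦ hβ, c, hs, h0, hsum⟩
      rcases Hpos (-β) hnegpos (Submodule.neg_mem _ hsp) with h | h
      · exact Or.inl (by simpa using Submodule.neg_mem _ h)
      · exact Or.inr (by simpa using Submodule.neg_mem _ h)
  -- minimal counterexample among positive roots
  by_contra hcon
  push_neg at hcon
  obtain ⟨γ₀, hγpos, hγsp, hγ1, hγ2⟩ := hcon
  set S : Set V := {γ | γ ∈ posRoots Φ Δ ∧ γ ∈ Submodule.span ℝ (J₁ ∪ J₂) ∧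
      γ ∉ Submodule.span ℝ J₁ ∧ γ ∉ Submodule.span ℝ J₂} with hS
  have hSsub : S ⊆ Φ := fun γ hγ => hγ.1.1
  have hSfin : S.Finite := hΦ.finite.subset hSsub
  set f : (V →₀ ℝ) → V := fun c => c.sum fun v r => r • v with hf
  set T : Set (V →₀ ℝ) := {c | (c.support : Set V) ⊆ Δ ∧ f c ∈ S} with hT
  have hTrep : ∀ c ∈ T, BRep Δ (f c) c := fun c hc => ⟨hc.1, rfl⟩
  have hTfin : T.Finite := by
    apply Set.Finite.of_finite_image (f := f)
    · exact hSfin.subset (by rintro _ ⟨c, hc, rfl⟩; exact hc.2)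
    · intro c hc c' hc' he
      exact rep_unique hΔ (hTrep c hc) (he ▸ hTrep c' hc')
  have hTne : T.Nonempty := by
    obtain ⟨c, hc⟩ := root_rep_exists hΔ hγpos.1
    exact ⟨c, hc.1, by rw [show f c = γ₀ from hc.2.symm]; exact ⟨hγpos, hγsp, hγ1, hγ2⟩⟩
  obtain ⟨c₀, hc₀T, hmin⟩ := Set.exists_min_image T (fun c => c.sum fun _ r => r) hTfin hTne
  set β₀ : V := f c₀ with hβ₀
  have hrep : BRep Δ β₀ c₀ := hTrep c₀ hc₀T
  have hβ₀S : β₀ ∈ S := hc₀T.2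
  have hβ₀Φ : β₀ ∈ Φ := hβ₀S.1.1
  have hc₀nn : ∀ v, 0 ≤ c₀ v := pos_rep_nonneg hΔ hβ₀S.1 hrep
  have hsupp : (c₀.support : Set V) ⊆ J₁ ∪ J₂ :=
    (rep_mem_span_iff hΔ (Set.union_subset h1 h2) hrep).mp hβ₀S.2.1
  set c₁ : V →₀ ℝ := c₀.filter (· ∈ J₁) with hc₁
  set c₂ : V →₀ ℝ := c₀.filter (fun v => ¬ v ∈ J₁) with hc₂
  have hc₁₂ : c₁ + c₂ = c₀ := Finsupp.filter_pos_add_filter_neg c₀ _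
  have hsupp1 : (c₁.support : Set V) ⊆ J₁ := by
    intro v hv
    rw [Finsupp.support_filter] at hv
    exact (Finset.mem_filter.mp hv).2
  have hsupp2 : (c₂.support : Set V) ⊆ J₂ := by
    intro v hv
    rw [Finsupp.support_filter] at hv
    obtain ⟨hv1, hv2⟩ := Finset.mem_filter.mp hv
    rcases hsupp hv1 with h | h
    · exact absurd h hv2
    · exact h
  have hrep1 : BRep Δ (f c₁) c₁ := ⟨hsupp1.trans h1, rfl⟩
  have hrep2 : BRep Δ (f c₂) c₂ := ⟨hsupp2.trans h2, rfl⟩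
  have hx : f c₁ ∈ Submodule.span ℝ J₁ := mem_span_of_rep_subset hrep1 hsupp1
  have hy : f c₂ ∈ Submodule.span ℝ J₂ := mem_span_of_rep_subset hrep2 hsupp2
  have hadd : β₀ = f c₁ + f c₂ := by
    rw [hβ₀, ← hc₁₂]
    exact (rep_add hrep1 hrep2).2.symm
  have hc₂ne : c₂ ≠ 0 := by
    intro h0
    rw [h0] at hadd
    simp only [hf] at hadd
    rw [Finsupp.sum_zero_index, add_zero] at hadd
    exact hβ₀S.2.2.1 (hadd ▸ hx)
  have hc₁ne : c₁ ≠ 0 := by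
    intro h0
    rw [h0] at hadd
    simp only [hf] at hadd
    rw [Finsupp.sum_zero_index, zero_add] at hadd
    exact hβ₀S.2.2.2 (hadd ▸ hy)
  -- find a simple root in J₁ with positive inner product with β₀
  have hxne : f c₁ ≠ 0 := by
    intro h0
    exact hc₁ne (rep_unique hΔ (h0 ▸ hrep1) rep_zero)
  have hinner_pos : 0 < (inner ℝ β₀ (f c₁) : ℝ) := by
    have hyx : (inner ℝ (f c₂) (f c₁) : ℝ) = 0 := by
      rw [real_inner_comm]
      exact orth_span horth hx hy
    rw [hadd, inner_add_left, hyx, add_zero]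
    exact inner_self_pos' hxne
  have hexa : ∃ a ∈ c₁.support, 0 < c₁ a * (inner ℝ β₀ a : ℝ) := by
    by_contra hno
    push_neg at hno
    have : (inner ℝ β₀ (f c₁) : ℝ) ≤ 0 := by
      have : (inner ℝ β₀ (f c₁) : ℝ) = ∑ v ∈ c₁.support, c₁ v * (inner ℝ β₀ v : ℝ) := by
        simp only [hf, Finsupp.sum]
        rw [inner_sum]
        exact Finset.sum_congr rfl fun v _ => real_inner_smul_right β₀ v (c₁ v)
      rw [this]
      exact Finset.sum_nonpos hno
    linarith
  obtain ⟨a, haS, hapos⟩ := hexa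
  have haJ₁ : a ∈ J₁ := hsupp1 haS
  have haΔ : a ∈ Δ := h1 haJ₁
  have haΦ : a ∈ Φ := hΔ.subset haΔ
  have hca : 0 < c₀ a := by
    have h1' : c₁ a = c₀ a := Finsupp.filter_apply_pos _ _ haJ₁
    rcases lt_or_ge 0 (c₀ a) with h | h
    · exact h
    · exfalso
      have : c₁ a = 0 := le_antisymm (h1' ▸ h) (h1' ▸ hc₀nn a)
      rw [this, zero_mul] at hapos
      exact lt_irrefl 0 hapos
  have hiba : 0 < (inner ℝ β₀ a : ℝ) := by
    have h1' : c₁ a = c₀ a := Finsupp.filter_apply_pos _ _ haJ₁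
    nlinarith [hapos, hc₀nn a, h1']
  have hβ₀ne_a : β₀ ≠ a := by
    intro h
    exact hβ₀S.2.2.1 (h ▸ Submodule.subset_span haJ₁)
  -- β₀ - a is a root
  have hδΦ : β₀ - a ∈ Φ := by
    have := add_mem_of_inner_neg hΦ hβ₀Φ (neg_mem hΦ haΦ)
      (by rw [inner_neg_right]; linarith) (by rw [← sub_eq_add_neg]; exact sub_ne_zero.mpr hβ₀ne_a)
    rwa [← sub_eq_add_neg] at this
  set c' : V →₀ ℝ := c₀ - Finsupp.single a 1 with hc'
  have hrepδ : BRep Δ (β₀ - a) c' := rep_sub hrep (rep_single haΔ)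
  -- a witness coefficient in J₂ that stays positive
  obtain ⟨v₂, hv₂⟩ := Finsupp.support_nonempty_iff.mpr hc₂ne
  have hv₂J₂ : v₂ ∈ J₂ := hsupp2 hv₂
  have hv₂nJ₁ : v₂ ∉ J₁ := by
    rw [hc₂, Finsupp.support_filter] at hv₂
    exact (Finset.mem_filter.mp hv₂).2
  have hv₂ne_a : v₂ ≠ a := fun h => hv₂nJ₁ (h ▸ haJ₁)
  have hcv₂pos : 0 < c₀ v₂ := by
    have : c₂ v₂ ≠ 0 := Finsupp.mem_support_iff.mp hv₂
    have he : c₂ v₂ = c₀ v₂ := Finsupp.filter_apply_pos _ _ hv₂nJ₁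
    rcases lt_or_ge 0 (c₀ v₂) with h | h
    · exact h
    · exact absurd (le_antisymm (he ▸ h) (he ▸ hc₀nn v₂)) (he ▸ this)
  have hc'v₂ : c' v₂ = c₀ v₂ := by
    rw [hc', Finsupp.sub_apply, Finsupp.single_apply, if_neg (fun h => hv₂ne_a h.symm), sub_zero]
  -- β₀ - a is a positive root
  have hδpos : β₀ - a ∈ posRoots Φ Δ := by
    rcases root_pos_or_neg hΔ hδΦ with h | h
    · exact h
    · exfalso
      have := neg_rep_nonpos hΔ h hrepδ v₂
      rw [hc'v₂] at this
      linarith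
  have hc'nn : ∀ v, 0 ≤ c' v := pos_rep_nonneg hΔ hδpos hrepδ
  have hsupp' : (c'.support : Set V) ⊆ J₁ ∪ J₂ := by
    intro v hv
    by_cases hva : v = a
    · exact hva ▸ Or.inl haJ₁
    · have : c' v = c₀ v := by
        rw [hc', Finsupp.sub_apply, Finsupp.single_apply, if_neg (fun h => hva h.symm), sub_zero]
      apply hsupp
      simp only [Finset.mem_coe, Finsupp.mem_support_iff] at hv ⊢
      rwa [this] at hv
  by_cases hδ2 : β₀ - a ∈ Submodule.span ℝ J₂
  · -- the reflection argument: β₀ - 2a = (β₀ - a) - a is a root with mixed signs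
    have hδa : (inner ℝ (β₀ - a) a : ℝ) = 0 := by
      rw [real_inner_comm]
      exact orth_span horth (Submodule.subset_span haJ₁) hδ2
    have hba2 : (inner ℝ β₀ a : ℝ) = inner ℝ a a := by
      have : (inner ℝ (β₀ - a) a : ℝ) = inner ℝ β₀ a - inner ℝ a a := inner_sub_left β₀ a a
      linarith [this, hδa]
    have haa : (0:ℝ) < inner ℝ a a := inner_self_pos' (root_ne_zero hΦ haΦ)
    have hrefl := hΦ.reflect_mem a haΦ β₀ hβ₀Φ
    have htwo : 2 * (inner ℝ β₀ a : ℝ) / (inner ℝ a a : ℝ) = 2 := by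
      rw [hba2, mul_div_assoc, div_self (ne_of_gt haa), mul_one]
    rw [htwo] at hrefl
    have hδδ : β₀ - (2:ℝ) • a = (β₀ - a) - a := by
      rw [two_smul]; abel
    rw [hδδ] at hrefl
    -- representation of (β₀ - a) - a
    set c'' : V →₀ ℝ := c' - Finsupp.single a 1 with hc''
    have hrepδδ : BRep Δ ((β₀ - a) - a) c'' := rep_sub hrepδ (rep_single haΔ)
    -- c' is supported in J₂, so c' a = 0
    have hc'a : c' a = 0 := by
      have hsuppc' : (c'.support : Set V) ⊆ J₂ :=
        (rep_mem_span_iff hΔ h2 hrepδ).mp hδ2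
      by_contra hne0
      exact hdisj a haJ₁ (hsuppc' (Finsupp.mem_support_iff.mpr hne0))
    have hval_a : c'' a = -1 := by
      rw [hc'', Finsupp.sub_apply, hc'a, Finsupp.single_apply, if_pos rfl]; ring
    have hval_v₂ : c'' v₂ = c₀ v₂ := by
      rw [hc'', Finsupp.sub_apply, hc'v₂, Finsupp.single_apply,
        if_neg (fun h => hv₂ne_a h.symm), sub_zero]
    rcases root_pos_or_neg hΔ hrefl with h | h
    · have := pos_rep_nonneg hΔ h hrepδδ a
      rw [hval_a] at this
      linarith
    · have := neg_rep_nonpos hΔ h hrepδδ v₂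
      rw [hval_v₂] at this
      linarith
  · -- minimality contradiction
    have hδ1 : β₀ - a ∉ Submodule.span ℝ J₁ := by
      intro hin
      have hsuppc' : (c'.support : Set V) ⊆ J₁ := (rep_mem_span_iff hΔ h1 hrepδ).mp hin
      have : v₂ ∈ c'.support := Finsupp.mem_support_iff.mpr (by rw [hc'v₂]; linarith)
      exact hv₂nJ₁ (hsuppc' this)
    have hδS : β₀ - a ∈ S := ⟨hδpos, mem_span_of_rep_subset hrepδ hsupp', hδ1, hδ2⟩
    have hc'T : c' ∈ T := by
      refine ⟨hrepδ.1, ?_⟩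
      rw [show f c' = β₀ - a from hrepδ.2.symm]
      exact hδS
    have hsum' : (c'.sum fun _ r => r) = (c₀.sum fun _ r => r) - 1 := by
      rw [hc', Finsupp.sum_sub_index (fun a b1 b2 => rfl)]
      rw [Finsupp.sum_single_index rfl]
    have := hmin c' hc'T
    rw [hsum'] at this
    linarith

lemma simple_pos {Φ Δ : Set V} (hΔ : IsBase Φ Δ) {a : V} (ha : a ∈ Δ) : a ∈ posRoots Φ Δ :=
  rep_pos (hΔ.subset ha) (rep_single ha) (fun v => by
    classical
    rw [Finsupp.single_apply]
    split <;> norm_num)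

lemma simple_mem_span_iff {Φ Δ A : Set V} (hΔ : IsBase Φ Δ) (hA : A ⊆ Δ) {a : V} (ha : a ∈ Δ) :
    a ∈ Submodule.span ℝ A ↔ a ∈ A := by
  rw [rep_mem_span_iff hΔ hA (rep_single ha)]
  constructor
  · intro h
    apply h
    simp [Finsupp.support_single_ne_zero a (one_ne_zero (α := ℝ))]
  · intro h v hv
    have := Finsupp.support_single_subset hv
    simp only [Finset.mem_singleton] at this
    rwa [this]

lemma simple_inner_nonpos {Φ Δ : Set V} (hΦ : IsRootSystem Φ) (hΔ : IsBase Φ Δ) {a b : V}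
    (ha : a ∈ Δ) (hb : b ∈ Δ) (hne : a ≠ b) : (inner ℝ a b : ℝ) ≤ 0 := by
  by_contra h
  push_neg at h
  have hδΦ : a - b ∈ Φ := by
    have := add_mem_of_inner_neg hΦ (hΔ.subset ha) (neg_mem hΦ (hΔ.subset hb))
      (by rw [inner_neg_right]; linarith) (by rw [← sub_eq_add_neg]; exact sub_ne_zero.mpr hne)
    rwa [← sub_eq_add_neg] at this
  classical
  set d : V →₀ ℝ := Finsupp.single a 1 - Finsupp.single b 1 with hd
  have hrep : BRep Δ (a - b) d := rep_sub (rep_single ha) (rep_single hb)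
  have hva : d a = 1 := by
    rw [hd, Finsupp.sub_apply, Finsupp.single_apply, Finsupp.single_apply, if_pos rfl,
      if_neg (fun h => hne h.symm), sub_zero]
  have hvb : d b = -1 := by
    rw [hd, Finsupp.sub_apply, Finsupp.single_apply, Finsupp.single_apply, if_pos rfl,
      if_neg hne]; ring
  rcases root_pos_or_neg hΔ hδΦ with hp | hn
  · have := pos_rep_nonneg hΔ hp hrep b
    rw [hvb] at this; linarith
  · have := neg_rep_nonpos hΔ hn hrep a
    rw [hva] at this; linarith

lemma root_span_inter {Φ Δ A B : Set V} (hΔ : IsBase Φ Δ) (hA : A ⊆ Δ) (hB : B ⊆ Δ)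
    {α : V} (hα : α ∈ Φ) (h1 : α ∈ Submodule.span ℝ A) (h2 : α ∈ Submodule.span ℝ B) :
    α ∈ Submodule.span ℝ (A ∩ B) := by
  obtain ⟨c, hc⟩ := root_rep_exists hΔ hα
  have s1 := (rep_mem_span_iff hΔ hA hc).mp h1
  have s2 := (rep_mem_span_iff hΔ hB hc).mp h2
  exact mem_span_of_rep_subset hc (fun v hv => ⟨s1 hv, s2 hv⟩)

lemma span_disjoint_eq_zero {Φ Δ A B : Set V} (hΦ : IsRootSystem Φ) (hΔ : IsBase Φ Δ)
    (hA : A ⊆ Δ) (hB : B ⊆ Δ) (hAB : A ∩ B = ∅) {α : V} (hα : α ∈ Φ)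
    (h1 : α ∈ Submodule.span ℝ A) (h2 : α ∈ Submodule.span ℝ B) : False := by
  have := root_span_inter hΔ hA hB hα h1 h2
  rw [hAB, Submodule.span_empty, Submodule.mem_bot] at this
  exact root_ne_zero hΦ hα this

lemma mem_rootsIn {Φ A : Set V} {α : V} :
    α ∈ rootsIn Φ A ↔ α ∈ Φ ∧ α ∈ Submodule.span ℝ A := Iff.rfl

lemma pos_add {Φ Δ : Set V} (hΔ : IsBase Φ Δ) {α β : V} (hα : α ∈ posRoots Φ Δ)
    (hβ : β ∈ posRoots Φ Δ) (hs : α + β ∈ Φ) : α + β ∈ posRoots Φ Δ := by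
  obtain ⟨cα, hcα, h0α⟩ := pos_rep hα
  obtain ⟨cβ, hcβ, h0β⟩ := pos_rep hβ
  exact rep_pos hs (rep_add hcα hcβ)
    (fun v => by rw [Finsupp.add_apply]; exact add_nonneg (h0α v) (h0β v))

lemma negroots_add {Φ Δ : Set V} (hΔ : IsBase Φ Δ) {α β : V} (hα : α ∈ negRoots Φ Δ)
    (hβ : β ∈ negRoots Φ Δ) (hs : α + β ∈ Φ) : α + β ∈ negRoots Φ Δ := by
  obtain ⟨cα, hcα⟩ := root_rep_exists hΔ hα.1
  obtain ⟨cβ, hcβ⟩ := root_rep_exists hΔ hβ.1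
  exact rep_neg_root hs (rep_add hcα hcβ)
    (fun v => by
      rw [Finsupp.add_apply]
      exact add_nonpos (neg_rep_nonpos hΔ hα hcα v) (neg_rep_nonpos hΔ hβ hcβ v))

theorem statement1' (Φ Δ : Set V) (hΦ : IsRootSystem Φ) (hΔ : IsBase Φ Δ)
    (I K : Set V) (hI : I ⊆ Δ) (hK : K ⊆ Δ) :
    (IsClosedSubset Φ (rootsIn Φ I ∪ (posRoots Φ Δ \ rootsIn Φ K)) ∧
      IsClosedSubset Φ (Φ \ (rootsIn Φ I ∪ (posRoots Φ Δ \ rootsIn Φ K)))) ↔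
      OrthogonalSets I (K \ I) := by
  classical
  have hKI : K \ I ⊆ Δ := fun x hx => hK hx.1
  have hKIinterI : (K \ I) ∩ I = ∅ := by
    ext x; simp only [Set.mem_inter_iff, Set.mem_diff, Set.mem_empty_iff_false, iff_false]
    tauto
  constructor
  · -- forward direction
    rintro ⟨hΓ, hΓc⟩ a ha b hb
    by_contra hne0
    have haΔ : a ∈ Δ := hI ha
    have hbΔ : b ∈ Δ := hK hb.1
    have hneab : a ≠ b := fun h => hb.2 (h ▸ ha)
    have hab : (inner ℝ a b : ℝ) < 0 :=
      lt_of_le_of_ne (simple_inner_nonpos hΦ hΔ haΔ hbΔ hneab) hne0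
    have hsumne : a + b ≠ 0 := by
      intro h0
      have hbeq : b = -a := by
        have := eq_neg_of_add_eq_zero_right h0
        exact this
      have h1 : BRep Δ b (Finsupp.single b 1) := rep_single hbΔ
      have h2 : BRep Δ b (-(Finsupp.single a 1)) := by
        rw [hbeq]; exact rep_neg (rep_single haΔ)
      have heq := rep_unique hΔ h1 h2
      have := congrArg (fun c : V →₀ ℝ => c b) heq
      simp only [Finsupp.single_apply, Finsupp.neg_apply, if_pos rfl, if_neg hneab] at this
      norm_num at this
    have hγΦ : a + b ∈ Φ :=
      add_mem_of_inner_neg hΦ (hΔ.subset haΔ) (hΔ.subset hbΔ) hab hsumne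
    have hγrep : BRep Δ (a + b) (Finsupp.single a 1 + Finsupp.single b 1) :=
      rep_add (rep_single haΔ) (rep_single hbΔ)
    have hγnI : a + b ∉ Submodule.span ℝ I := by
      intro hsp
      have hsupp := (rep_mem_span_iff hΔ hI hγrep).mp hsp
      have hbmem : b ∈ (Finsupp.single a (1:ℝ) + Finsupp.single b (1:ℝ)).support := by
        rw [Finsupp.mem_support_iff, Finsupp.add_apply, Finsupp.single_apply,
          Finsupp.single_apply, if_neg hneab, if_pos rfl]
        norm_num
      exact hb.2 (hsupp (Finset.mem_coe.mpr hbmem))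
    have hnγΦ : -(a + b) ∈ Φ := neg_mem hΦ hγΦ
    have hnγneg : -(a + b) ∈ negRoots Φ Δ := by
      apply rep_neg_root hnγΦ (rep_neg hγrep)
      intro v
      rw [Finsupp.neg_apply, Finsupp.add_apply, Finsupp.single_apply, Finsupp.single_apply]
      split <;> split <;> norm_num
    have hnγmem : -(a + b) ∈ Φ \ (rootsIn Φ I ∪ (posRoots Φ Δ \ rootsIn Φ K)) := by
      refine ⟨hnγΦ, ?_⟩
      rintro (⟨_, hsp⟩ | ⟨hpos, _⟩)
      · exact hγnI (by simpa using Submodule.neg_mem _ hsp)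
      · exact not_pos_and_neg hΦ hΔ hpos hnγneg
    have hbmem' : b ∈ Φ \ (rootsIn Φ I ∪ (posRoots Φ Δ \ rootsIn Φ K)) := by
      refine ⟨hΔ.subset hbΔ, ?_⟩
      rintro (⟨_, hsp⟩ | ⟨_, hnk⟩)
      · exact hb.2 ((simple_mem_span_iff hΔ hI hbΔ).mp hsp)
      · exact hnk ⟨hΔ.subset hbΔ, Submodule.subset_span hb.1⟩
    have hsum2 : -(a + b) + b ∈ Φ := by
      rw [show -(a + b) + b = -a by abel]
      exact neg_mem hΦ (hΔ.subset haΔ)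
    have := hΓc _ hnγmem _ hbmem' hsum2
    rw [show -(a + b) + b = -a by abel] at this
    exact this.2 (Or.inl ⟨neg_mem hΦ (hΔ.subset haΔ),
      Submodule.neg_mem _ (Submodule.subset_span ha)⟩)
  · -- backward direction
    intro horth
    have horth' : OrthogonalSets (K ∩ I) (K \ I) := fun x hx y hy => horth x hx.2 y hy
    have spanKcases : ∀ {α : V}, α ∈ Φ → α ∈ Submodule.span ℝ K →
        α ∈ Submodule.span ℝ I ∨ α ∈ Submodule.span ℝ (K \ I) := by
      intro α hαΦ hαK
      have hsp : α ∈ Submodule.span ℝ ((K ∩ I) ∪ (K \ I)) := by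
        rwa [Set.inter_union_diff]
      rcases orth_decomp hΦ hΔ (fun x hx => hK hx.1) hKI horth' hαΦ hsp with h | h
      · exact Or.inl (Submodule.span_mono Set.inter_subset_right h)
      · exact Or.inr h
    have ending : ∀ {x y : V}, x ∈ Φ → y ∈ Φ → x ∈ Submodule.span ℝ K →
        y ∈ Submodule.span ℝ K → x ∉ Submodule.span ℝ I → y ∉ Submodule.span ℝ I →
        x + y ∈ Φ → x + y ∈ Submodule.span ℝ I → False := by
      intro x y hxΦ hyΦ hxK hyK hxnI hynI hγΦ hγI
      rcases spanKcases hxΦ hxK with h | hx'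
      · exact hxnI h
      rcases spanKcases hyΦ hyK with h | hy'
      · exact hynI h
      exact span_disjoint_eq_zero hΦ hΔ hKI hI hKIinterI hγΦ
        (Submodule.add_mem _ hx' hy') hγI
    constructor
    · -- Γ is closed
      have key : ∀ x y : V, x ∈ rootsIn Φ I → y ∈ posRoots Φ Δ \ rootsIn Φ K → x + y ∈ Φ →
          x + y ∈ rootsIn Φ I ∪ (posRoots Φ Δ \ rootsIn Φ K) := by
        intro x y hx hy hxy
        obtain ⟨cx, hcx⟩ := root_rep_exists hΔ hx.1
        have hcxI : (cx.support : Set V) ⊆ I := (rep_mem_span_iff hΔ hI hcx).mp hx.2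
        obtain ⟨cy, hcy, h0y⟩ := pos_rep hy.1
        have hrepγ : BRep Δ (x + y) (cx + cy) := rep_add hcx hcy
        rcases root_pos_or_neg hΔ hxy with hp | hn
        · by_cases hk : x + y ∈ Submodule.span ℝ K
          · -- show x + y ∈ span I
            have hsuppγ : ((cx + cy).support : Set V) ⊆ K :=
              (rep_mem_span_iff hΔ hK hrepγ).mp hk
            have hysp : y ∈ Submodule.span ℝ (I ∪ K) := by
              apply mem_span_of_rep_subset hcy
              intro v hv
              by_cases hvI : v ∈ I
              · exact Or.inl hvI
              · right
                have hcxv : cx v = 0 := by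
                  by_contra h
                  exact hvI (hcxI (Finsupp.mem_support_iff.mpr h))
                apply hsuppγ
                simp only [Finset.mem_coe, Finsupp.mem_support_iff, Finsupp.add_apply,
                  hcxv, zero_add] at hv ⊢
                exact hv
            have hysp' : y ∈ Submodule.span ℝ (I ∪ (K \ I)) := by
              rwa [Set.union_diff_self]
            rcases orth_decomp hΦ hΔ hI hKI horth hy.1.1 hysp' with h | h
            · exact Or.inl ⟨hxy, Submodule.add_mem _ hx.2 h⟩
            · exact absurd ⟨hy.1.1, Submodule.span_mono Set.diff_subset h⟩ hy.2
          · exact Or.inr ⟨hp, fun hkK => hk hkK.2⟩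
        · -- negative: x + y ∈ span I
          left
          refine ⟨hxy, ?_⟩
          apply mem_span_of_rep_subset hrepγ
          intro v hv
          by_cases hvI : v ∈ I
          · exact hvI
          · exfalso
            have hcxv : cx v = 0 := by
              by_contra h
              exact hvI (hcxI (Finsupp.mem_support_iff.mpr h))
            have hle := neg_rep_nonpos hΔ hn hrepγ v
            rw [Finsupp.add_apply, hcxv, zero_add] at hle
            have : cy v = 0 := le_antisymm hle (h0y v)
            simp only [Finset.mem_coe, Finsupp.mem_support_iff, Finsupp.add_apply,
              hcxv, zero_add, this] at hv
            exact hv rfl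
      intro α hα β hβ hγΦ
      rcases hα with hα | hα <;> rcases hβ with hβ | hβ
      · exact Or.inl ⟨hγΦ, Submodule.add_mem _ hα.2 hβ.2⟩
      · exact key α β hα hβ hγΦ
      · rw [add_comm] at hγΦ ⊢
        exact key β α hβ hα hγΦ
      · -- both positive, not in span K
        right
        refine ⟨pos_add hΔ hα.1 hβ.1 hγΦ, fun hkmem => ?_⟩
        obtain ⟨cα, hcα, h0α⟩ := pos_rep hα.1
        obtain ⟨cβ, hcβ, h0β⟩ := pos_rep hβ.1
        have hrepγ : BRep Δ (α + β) (cα + cβ) := rep_add hcα hcβ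
        have hsuppγ : ((cα + cβ).support : Set V) ⊆ K :=
          (rep_mem_span_iff hΔ hK hrepγ).mp hkmem.2
        apply hα.2
        refine ⟨hα.1.1, mem_span_of_rep_subset hcα ?_⟩
        intro v hv
        apply hsuppγ
        simp only [Finset.mem_coe, Finsupp.mem_support_iff, Finsupp.add_apply] at hv ⊢
        intro h0
        have h1 : (0:ℝ) ≤ cβ v := h0β v
        have h2 : (0:ℝ) ≤ cα v := h0α v
        have : cα v = 0 := by linarith [le_antisymm (by linarith : cα v + cβ v ≤ 0) (by positivity)]
        exact hv this
    · -- complement is closed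
      intro α hα β hβ hγΦ
      obtain ⟨hαΦ, hαn⟩ := hα
      obtain ⟨hβΦ, hβn⟩ := hβ
      simp only [Set.mem_union, not_or, Set.mem_diff] at hαn hβn
      have hαnI : α ∉ Submodule.span ℝ I := fun h => hαn.1 ⟨hαΦ, h⟩
      have hβnI : β ∉ Submodule.span ℝ I := fun h => hβn.1 ⟨hβΦ, h⟩
      have hαcase : α ∈ negRoots Φ Δ ∨ (α ∈ posRoots Φ Δ ∧ α ∈ Submodule.span ℝ K) := by
        rcases root_pos_or_neg hΔ hαΦ with h | h
        · right
          refine ⟨h, ?_⟩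
          by_contra hk
          exact hαn.2 ⟨h, fun hm => hk hm.2⟩
        · exact Or.inl h
      have hβcase : β ∈ negRoots Φ Δ ∨ (β ∈ posRoots Φ Δ ∧ β ∈ Submodule.span ℝ K) := by
        rcases root_pos_or_neg hΔ hβΦ with h | h
        · right
          refine ⟨h, ?_⟩
          by_contra hk
          exact hβn.2 ⟨h, fun hm => hk hm.2⟩
        · exact Or.inl h
      -- helper: goal membership
      have goal_of : α + β ∉ Submodule.span ℝ I →
          (α + β ∈ posRoots Φ Δ → α + β ∈ Submodule.span ℝ K) →
          α + β ∈ Φ \ (rootsIn Φ I ∪ (posRoots Φ Δ \ rootsIn Φ K)) := by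
        intro h1 h2
        refine ⟨hγΦ, ?_⟩
        rintro (⟨_, hsp⟩ | ⟨hpos, hnk⟩)
        · exact h1 hsp
        · exact hnk ⟨hγΦ, h2 hpos⟩
      -- mixed case helper
      have keyC : ∀ x y : V, x ∈ Φ → y ∈ Φ → x ∉ Submodule.span ℝ I →
          y ∉ Submodule.span ℝ I → x ∈ negRoots Φ Δ →
          y ∈ posRoots Φ Δ ∧ y ∈ Submodule.span ℝ K → x + y ∈ Φ →
          (x + y ∉ Submodule.span ℝ I ∧
            (x + y ∈ posRoots Φ Δ → x + y ∈ Submodule.span ℝ K)) := by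
        intro x y hxΦ hyΦ hxnI hynI hxneg hypos hxyΦ
        obtain ⟨cx, hcx⟩ := root_rep_exists hΔ hxΦ
        have h0x := neg_rep_nonpos hΔ hxneg hcx
        obtain ⟨cy, hcy, h0y⟩ := pos_rep hypos.1
        have hcyK : (cy.support : Set V) ⊆ K := (rep_mem_span_iff hΔ hK hcy).mp hypos.2
        have hrepγ : BRep Δ (x + y) (cx + cy) := rep_add hcx hcy
        rcases root_pos_or_neg hΔ hxyΦ with hp | hn
        · -- γ positive: γ ∈ span K and x ∈ span K
          have h0γ := pos_rep_nonneg hΔ hp hrepγ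
          have hxK : (cx.support : Set V) ⊆ K := by
            intro v hv
            by_contra hvK
            have hcyv : cy v = 0 := by
              by_contra h
              exact hvK (hcyK (Finsupp.mem_support_iff.mpr h))
            have h1 := h0γ v
            rw [Finsupp.add_apply, hcyv, add_zero] at h1
            have : cx v = 0 := le_antisymm (h0x v) h1
            simp only [Finset.mem_coe, Finsupp.mem_support_iff, this] at hv
            exact hv rfl
          have hxspK : x ∈ Submodule.span ℝ K := mem_span_of_rep_subset hcx hxK
          have hγK : x + y ∈ Submodule.span ℝ K := Submodule.add_mem _ hxspK hypos.2
          refine ⟨fun hγI => ending hxΦ hyΦ hxspK hypos.2 hxnI hynI hxyΦ hγI, fun _ => hγK⟩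
        · -- γ negative
          refine ⟨?_, fun hpos => absurd (not_pos_and_neg hΦ hΔ hpos hn) (fun h => h)⟩
          intro hγI
          -- x ∈ span (I ∪ K)
          have hsuppγ : ((cx + cy).support : Set V) ⊆ I := (rep_mem_span_iff hΔ hI hrepγ).mp hγI
          have hxsp : x ∈ Submodule.span ℝ (I ∪ (K \ I)) := by
            rw [Set.union_diff_self]
            apply mem_span_of_rep_subset hcx
            intro v hv
            by_cases hvI : v ∈ I
            · exact Or.inl hvI
            · right
              apply hcyK
              by_contra hvy
              have hcyv : cy v = 0 := by
                by_contra h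
                exact hvy (Finsupp.mem_support_iff.mpr h)
              have hcxv : cx v ≠ 0 := Finsupp.mem_support_iff.mp hv
              have : v ∈ ((cx + cy).support : Set V) := by
                simp only [Finset.mem_coe, Finsupp.mem_support_iff, Finsupp.add_apply,
                  hcyv, add_zero]
                exact hcxv
              exact hvI (hsuppγ this)
          rcases orth_decomp hΦ hΔ hI hKI horth hxΦ hxsp with h | h
          · exact hxnI h
          · -- x ∈ span (K \ I) ⊆ span K
            have hxspK : x ∈ Submodule.span ℝ K := Submodule.span_mono Set.diff_subset h
            exact ending hxΦ hyΦ hxspK hypos.2 hxnI hynI hxyΦ hγI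
      rcases hαcase with hαc | hαc <;> rcases hβcase with hβc | hβc
      · -- both negative
        have hγneg : α + β ∈ negRoots Φ Δ := negroots_add hΔ hαc hβc hγΦ
        apply goal_of
        · intro hγI
          obtain ⟨cα, hcα⟩ := root_rep_exists hΔ hαΦ
          obtain ⟨cβ, hcβ⟩ := root_rep_exists hΔ hβΦ
          have h0α := neg_rep_nonpos hΔ hαc hcα
          have h0β := neg_rep_nonpos hΔ hβc hcβ
          have hrepγ : BRep Δ (α + β) (cα + cβ) := rep_add hcα hcβ
          have hsuppγ : ((cα + cβ).support : Set V) ⊆ I := (rep_mem_span_iff hΔ hI hrepγ).mp hγI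
          apply hαnI
          apply mem_span_of_rep_subset hcα
          intro v hv
          by_cases hvI : v ∈ I
          · exact hvI
          · exfalso
            have hcαv : cα v ≠ 0 := Finsupp.mem_support_iff.mp hv
            have : cα v + cβ v = 0 := by
              by_contra h
              exact hvI (hsuppγ (by
                simp only [Finset.mem_coe, Finsupp.mem_support_iff, Finsupp.add_apply]
                exact h))
            have : cα v = 0 := by linarith [h0α v, h0β v]
            exact hcαv this
        · intro hpos
          exact absurd (not_pos_and_neg hΦ hΔ hpos hγneg) (fun h => h)
      · -- α negative, β positive ∧ span K
        obtain ⟨h1, h2⟩ := keyC α β hαΦ hβΦ hαnI hβnI hαc hβc hγΦ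
        exact goal_of h1 h2
      · -- α positive ∧ span K, β negative
        have hcomm : β + α ∈ Φ := by rwa [add_comm]
        obtain ⟨h1, h2⟩ := keyC β α hβΦ hαΦ hβnI hαnI hβc hαc hcomm
        rw [add_comm β α] at h1 h2
        exact goal_of h1 h2
      · -- both positive ∧ span K
        have hγK : α + β ∈ Submodule.span ℝ K := Submodule.add_mem _ hαc.2 hβc.2
        apply goal_of
        · exact fun hγI => ending hαΦ hβΦ hαc.2 hβc.2 hαnI hβnI hγΦ hγI
        · exact fun _ => hγK


/-- For `I, K ⊆ Π`, the set `Γ(I,K) := Φ_I ∪ (Φ⁺ \ Φ_K)` is invertible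
(both it and its complement in `Φ` are closed) if and only if `I` is orthogonal to `K \ I`. -/
theorem statement1 (Φ Δ : Set V) (hΦ : IsRootSystem Φ) (hΔ : IsBase Φ Δ)
    (I K : Set V) (hI : I ⊆ Δ) (hK : K ⊆ Δ) :
    (IsClosedSubset Φ (rootsIn Φ I ∪ (posRoots Φ Δ \ rootsIn Φ K)) ∧
      IsClosedSubset Φ (Φ \ (rootsIn Φ I ∪ (posRoots Φ Δ \ rootsIn Φ K)))) ↔
      OrthogonalSets I (K \ I) := by
  exact statement1' Φ Δ hΦ hΔ I K hI hK
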